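/- There exist absolute constants c₀ > 0, C₀ > 0 and an integer n₀ such that for every even integer n ≥ n₀ and every ε ∈ (0,1) the polynomial Q(z) = z^n − c Σ_{j=0}^{m−1} Σ_{l=0}^{n−1} ξ_j^{−l} z^l, where m = n/2, c = (ε/m)/(1+2ε), and ξ_j = e^{2πij/n}, satisfies c₀ (1 + ε log n) ≤ sup_{|z|=1} |Q(z)| ≤ C₀ (1 + ε log n). -/

import Mathlib

open MeasureTheory Polynomial Real Set

noncomputable section

lemma exp_two_theta_sub_one (θ : ℝ) :
    Complex.exp ((2*θ : ℝ) * Complex.I) - 1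
      = 2 * Complex.I * (Real.sin θ : ℂ) * Complex.exp ((θ:ℝ) * Complex.I) := by
  have h : ((2*θ:ℝ):ℂ) * Complex.I = (θ:ℂ)*Complex.I + (θ:ℂ)*Complex.I := by
    push_cast; ring
  rw [h, Complex.exp_add, Complex.exp_mul_I, Complex.ofReal_sin]
  linear_combination Complex.sin_sq_add_cos_sq (θ:ℂ) - Complex.sin (θ:ℂ)^2 * Complex.I_sq

lemma exp_ne_one {x : ℝ} (h0 : 0 < x) (h2 : x < 2*π) : Complex.exp ((x:ℝ) * Complex.I) ≠ 1 := by
  intro h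
  rw [Complex.exp_eq_one_iff] at h
  obtain ⟨k, hk⟩ := h
  have hI : (x:ℂ) = (k:ℂ) * (2*π) := by
    have h2 : (x:ℂ) * Complex.I = ((k:ℂ) * (2*π)) * Complex.I := by rw [hk]; ring
    exact mul_right_cancel₀ Complex.I_ne_zero h2
  have hx : x = (k:ℝ) * (2*π) := by exact_mod_cast hI
  have hπ := Real.pi_pos
  rcases le_or_gt (k:ℝ) 0 with hk0 | hk1
  · nlinarith
  · have : (1:ℝ) ≤ (k:ℝ) := by exact_mod_cast hk1
    nlinarith

lemma Tsum (n m : ℕ) (hnm : n = 2*m) (hm : 1 ≤ m) (i : ℕ) (hi : i < n) (hi0 : 0 < i) :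
    ∑ j ∈ Finset.range m, (Complex.exp ((2*π*j/n : ℝ) * Complex.I))⁻¹ ^ i
      = if Odd i then
          -Complex.I * Complex.exp ((π*i/n : ℝ) * Complex.I) / ((Real.sin (π*i/n) : ℝ) : ℂ)
        else 0 := by
  have hn0 : (0:ℝ) < n := by
    have : 0 < n := by omega
    exact_mod_cast this
  have hπ := Real.pi_pos
  have hterm : ∀ j : ℕ, (Complex.exp ((2*π*j/n:ℝ) * Complex.I))⁻¹ ^ i
      = (Complex.exp ((-(2*π*i/n):ℝ) * Complex.I))^j := by
    intro j
    rw [← Complex.exp_neg, ← Complex.exp_nat_mul, ← Complex.exp_nat_mul]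
    congr 1
    push_cast
    field_simp
  have hω : Complex.exp ((-(2*π*i/n):ℝ) * Complex.I) ≠ 1 := by
    have : ((-(2*π*i/n):ℝ) : ℂ) * Complex.I = -(((2*π*i/n : ℝ):ℂ) * Complex.I) := by
      push_cast; ring
    rw [this, Complex.exp_neg]
    rw [ne_eq, inv_eq_one]
    apply exp_ne_one
    · have hia : (0:ℝ) < (i:ℝ) := by exact_mod_cast hi0
      exact div_pos (by nlinarith) hn0
    · have hin : (i:ℝ) < (n:ℝ) := by exact_mod_cast hi
      rw [div_lt_iff₀ hn0]
      nlinarith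
  have hs : 0 < Real.sin (π*i/n) := by
    apply Real.sin_pos_of_pos_of_lt_pi
    · have hia : (0:ℝ) < (i:ℝ) := by exact_mod_cast hi0
      exact div_pos (by nlinarith) hn0
    · have hin : (i:ℝ) < (n:ℝ) := by exact_mod_cast hi
      rw [div_lt_iff₀ hn0]
      nlinarith
  simp only [hterm]
  rw [geom_sum_eq hω]
  have hpow : (Complex.exp ((-(2*π*i/n):ℝ) * Complex.I))^m
      = (Complex.exp ((π:ℝ) * Complex.I))⁻¹ ^ i := by
    rw [← Complex.exp_nat_mul, ← Complex.exp_neg, ← Complex.exp_nat_mul]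
    congr 1
    have h2m : (n:ℂ) = 2*(m:ℂ) := by exact_mod_cast hnm
    have hm0 : (m:ℂ) ≠ 0 := by
      have : m ≠ 0 := by omega
      exact_mod_cast this
    push_cast
    rw [h2m]
    field_simp
  have hden : Complex.exp ((-(2*π*i/n):ℝ) * Complex.I) - 1
      = -(2 * Complex.I * ((Real.sin (π*i/n) : ℝ):ℂ)
          * Complex.exp ((-(π*i/n):ℝ) * Complex.I)) := by
    have h2 : (-(2*π*i/n):ℝ) = 2 * (-(π*i/n)) := by ring
    rw [h2, exp_two_theta_sub_one, Real.sin_neg]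
    push_cast
    ring
  rw [hpow, Complex.exp_pi_mul_I, hden]
  simp only [inv_neg, inv_one]
  rcases Nat.even_or_odd i with he | ho
  · rw [if_neg (by simpa using (Nat.not_odd_iff_even.mpr he))]
    rw [he.neg_one_pow]
    simp
  · rw [if_pos ho, ho.neg_one_pow]
    set s' : ℂ := ((Real.sin (π*i/n) : ℝ) : ℂ) with hsdef
    set e : ℂ := Complex.exp (((π*i/n : ℝ):ℂ) * Complex.I) with hedef
    set e' : ℂ := Complex.exp (((-(π*i/n):ℝ):ℂ) * Complex.I) with hedef'
    have hee : e' * e = 1 := by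
      rw [hedef, hedef', ← Complex.exp_add, ← Complex.exp_zero]
      congr 1
      push_cast
      ring
    have hsne : s' ≠ 0 := by
      rw [hsdef]
      exact_mod_cast hs.ne'
    have hene : e' ≠ 0 := Complex.exp_ne_zero _
    have hb : -(2*Complex.I*s'*e') ≠ 0 := by
      simp [hsne, hene, Complex.I_ne_zero]
    rw [div_eq_div_iff hb hsne]
    linear_combination (-2*s'*(e'*e)) * Complex.I_sq + (2*s') * hee

lemma sum_range_even_odd {M : Type*} [AddCommMonoid M] (f : ℕ → M) (m : ℕ) :
    ∑ i ∈ Finset.range (2*m), f i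
      = ∑ t ∈ Finset.range m, f (2*t) + ∑ t ∈ Finset.range m, f (2*t+1) := by
  induction m with
  | zero => simp
  | succ k ih =>
      rw [show 2*(k+1) = 2*k+1+1 by ring, Finset.sum_range_succ, Finset.sum_range_succ,
        Finset.sum_range_succ, Finset.sum_range_succ, ih]
      abel

lemma harmonic_cast (m : ℕ) : ((harmonic m : ℚ) : ℝ) = ∑ t ∈ Finset.range m, (1:ℝ)/(t+1) := by
  rw [harmonic]
  push_cast
  simp [one_div]

lemma Hlow (m : ℕ) : Real.log (m+1) ≤ 2 * ∑ t ∈ Finset.range m, (1:ℝ)/(2*t+1) := by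
  have h1 := log_add_one_le_harmonic m
  rw [harmonic_cast] at h1
  have h2 : ∑ t ∈ Finset.range m, (1:ℝ)/(t+1)
      ≤ ∑ t ∈ Finset.range m, 2 * ((1:ℝ)/(2*t+1)) := by
    apply Finset.sum_le_sum
    intro t _
    have ht : (0:ℝ) ≤ t := Nat.cast_nonneg t
    have h4 : 2*((1:ℝ)/(2*t+1)) = 2/(2*(t:ℝ)+1) := by ring
    rw [h4, div_le_div_iff₀ (by positivity) (by positivity)]
    nlinarith
  rw [Finset.mul_sum]
  have h3 : ∑ t ∈ Finset.range m, 2 * ((1:ℝ)/(2*t+1))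
      = ∑ t ∈ Finset.range m, 2 * ((1:ℝ)/(2*(t:ℝ)+1)) := rfl
  calc Real.log (m+1) ≤ _ := by exact_mod_cast h1
    _ ≤ _ := h2

lemma Hhigh (m : ℕ) : ∑ t ∈ Finset.range m, (1:ℝ)/(2*t+1) ≤ 1 + Real.log m := by
  have h1 := harmonic_le_one_add_log m
  rw [harmonic_cast] at h1
  refine le_trans ?_ h1
  apply Finset.sum_le_sum
  intro t _
  have ht : (0:ℝ) ≤ t := Nat.cast_nonneg t
  apply div_le_div_of_nonneg_left (by norm_num) (by positivity)
  linarith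

lemma cast_sub_helper (m j : ℕ) (hj : j < m) : ((m - 1 - j : ℕ):ℝ) = (m:ℝ) - 1 - j := by
  have h : m - 1 - j = m - (1+j) := by omega
  rw [h, Nat.cast_sub (by omega)]
  push_cast; ring

lemma reflect_sum (n m : ℕ) (hnm : n = 2*m) :
    ∑ t ∈ Finset.range m, (1:ℝ)/((n:ℝ) - (2*t+1))
      = ∑ t ∈ Finset.range m, (1:ℝ)/(2*t+1) := by
  rw [← Finset.sum_range_reflect (fun t => (1:ℝ)/(2*t+1)) m]
  apply Finset.sum_congr rfl
  intro j hj
  rw [Finset.mem_range] at hj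
  rw [cast_sub_helper m j hj]
  have hn : (n:ℝ) = 2*m := by exact_mod_cast hnm
  rw [hn]
  ring_nf

lemma x_pos (n m : ℕ) (hnm : n = 2*m) (hm : 1 ≤ m) (t : ℕ) (ht : t < m) :
    0 < π*(2*t+1)/n ∧ π*(2*t+1)/n < π ∧ 0 < Real.sin (π*(2*t+1)/n) := by
  have hπ := Real.pi_pos
  have hn0 : (0:ℝ) < n := by
    have : 0 < n := by omega
    exact_mod_cast this
  have ht' : (2*(t:ℝ)+1) < n := by
    have : 2*t+1 < n := by omega
    exact_mod_cast this
  have ht0 : (0:ℝ) ≤ t := Nat.cast_nonneg t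
  have h1 : 0 < π*(2*(t:ℝ)+1)/n := by positivity
  have h2 : π*(2*(t:ℝ)+1)/n < π := by
    rw [div_lt_iff₀ hn0]
    nlinarith
  exact ⟨h1, h2, Real.sin_pos_of_pos_of_lt_pi h1 h2⟩

lemma Slow (n m : ℕ) (hnm : n = 2*m) (hm : 1 ≤ m) :
    ((n:ℝ)/π) * ∑ t ∈ Finset.range m, (1:ℝ)/(2*t+1)
      ≤ ∑ t ∈ Finset.range m, 1/Real.sin (π*(2*t+1)/n) := by
  have hπ := Real.pi_pos
  rw [Finset.mul_sum]
  apply Finset.sum_le_sum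
  intro t ht
  rw [Finset.mem_range] at ht
  obtain ⟨h1, h2, h3⟩ := x_pos n m hnm hm t ht
  have hsle : Real.sin (π*(2*t+1)/n) ≤ π*(2*t+1)/n := Real.sin_le h1.le
  have ht0 : (0:ℝ) ≤ t := Nat.cast_nonneg t
  have hn0 : (0:ℝ) < n := by
    have : 0 < n := by omega
    exact_mod_cast this
  have key : (n:ℝ)/π * (1/(2*t+1)) = 1/(π*(2*t+1)/n) := by
    field_simp
  rw [key]
  exact one_div_le_one_div_of_le h3 hsle

lemma Shigh (n m : ℕ) (hnm : n = 2*m) (hm : 1 ≤ m) :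
    ∑ t ∈ Finset.range m, 1/Real.sin (π*(2*t+1)/n)
      ≤ (n:ℝ) * ∑ t ∈ Finset.range m, (1:ℝ)/(2*t+1) := by
  have hπ := Real.pi_pos
  have hn0 : (0:ℝ) < n := by
    have : 0 < n := by omega
    exact_mod_cast this
  have step : ∀ t ∈ Finset.range m, 1/Real.sin (π*(2*t+1)/n)
      ≤ ((n:ℝ)/2) * (1/(2*t+1)) + ((n:ℝ)/2) * (1/((n:ℝ) - (2*t+1))) := by
    intro t ht
    rw [Finset.mem_range] at ht
    obtain ⟨h1, h2, h3⟩ := x_pos n m hnm hm t ht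
    have ht0 : (0:ℝ) ≤ t := Nat.cast_nonneg t
    have htn : (2*(t:ℝ)+1) < n := by
      have : 2*t+1 < n := by exact_mod_cast (by omega : 2*t+1 < n)
      exact_mod_cast this
    have hd1 : (0:ℝ) < 2*(t:ℝ)+1 := by positivity
    have hd2 : (0:ℝ) < (n:ℝ) - (2*t+1) := by linarith
    rcases le_or_gt (π*(2*t+1)/n) (π/2) with hc | hc
    · have hj := Real.mul_le_sin h1.le hc
      have : (2:ℝ)/π * (π*(2*t+1)/n) = (2*t+1)*2/n := by field_simp
      rw [this] at hj
      have hlb : (0:ℝ) < (2*(t:ℝ)+1)*2/n := by positivity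
      have h4 : 1/Real.sin (π*(2*t+1)/n) ≤ 1/((2*(t:ℝ)+1)*2/n) :=
        one_div_le_one_div_of_le hlb hj
      calc 1/Real.sin (π*(2*t+1)/n) ≤ 1/((2*(t:ℝ)+1)*2/n) := h4
        _ = ((n:ℝ)/2) * (1/(2*t+1)) := by
            rw [one_div_div]
            field_simp
        _ ≤ _ := by
            have : 0 ≤ ((n:ℝ)/2) * (1/((n:ℝ) - (2*t+1))) := by positivity
            linarith
    · have hx2pos : (0:ℝ) ≤ π*((n:ℝ) - (2*t+1))/n := by positivity
      have hx2le : π*((n:ℝ) - (2*t+1))/n ≤ π/2 := by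
        rw [lt_div_iff₀ hn0] at hc
        rw [div_le_iff₀ hn0]
        nlinarith
      have hj := Real.mul_le_sin hx2pos hx2le
      have hx2 : π*((n:ℝ) - (2*t+1))/n = π - π*(2*t+1)/n := by field_simp
      rw [hx2, Real.sin_pi_sub] at hj
      have heq : (2:ℝ)/π * (π - π*(2*t+1)/n) = ((n:ℝ) - (2*t+1))*2/n := by
        rw [← hx2]
        field_simp
      rw [heq] at hj
      have hlb : (0:ℝ) < ((n:ℝ) - (2*(t:ℝ)+1))*2/n := by positivity
      have h4 : 1/Real.sin (π*(2*t+1)/n) ≤ 1/(((n:ℝ) - (2*(t:ℝ)+1))*2/n) :=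
        one_div_le_one_div_of_le hlb hj
      calc 1/Real.sin (π*(2*t+1)/n) ≤ 1/(((n:ℝ) - (2*(t:ℝ)+1))*2/n) := h4
        _ = ((n:ℝ)/2) * (1/((n:ℝ) - (2*t+1))) := by
            rw [one_div_div, mul_one_div, div_div]
            ring_nf
        _ ≤ _ := by
            have : 0 ≤ ((n:ℝ)/2) * (1/(2*(t:ℝ)+1)) := by positivity
            linarith
  calc ∑ t ∈ Finset.range m, 1/Real.sin (π*(2*t+1)/n)
      ≤ ∑ t ∈ Finset.range m, (((n:ℝ)/2) * (1/(2*t+1)) + ((n:ℝ)/2) * (1/((n:ℝ) - (2*t+1)))) :=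
        Finset.sum_le_sum step
    _ = ((n:ℝ)/2) * (∑ t ∈ Finset.range m, (1:ℝ)/(2*t+1))
        + ((n:ℝ)/2) * (∑ t ∈ Finset.range m, (1:ℝ)/((n:ℝ) - (2*t+1))) := by
        rw [Finset.sum_add_distrib, Finset.mul_sum, Finset.mul_sum]
    _ = (n:ℝ) * ∑ t ∈ Finset.range m, (1:ℝ)/(2*t+1) := by
        rw [reflect_sum n m hnm]; ring

lemma term_eq (a s : ℝ) (hs : s ≠ 0) :
    -Complex.I * Complex.exp ((a:ℝ) * Complex.I) / ((s:ℝ):ℂ) * Complex.exp ((a:ℝ)*Complex.I)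
      = ((Real.sin (2*a)/s : ℝ):ℂ) + ((-Real.cos (2*a)/s : ℝ):ℂ) * Complex.I := by
  have he2 : Complex.exp ((a:ℝ)*Complex.I) * Complex.exp ((a:ℝ)*Complex.I)
      = ((Real.cos (2*a) : ℝ):ℂ) + ((Real.sin (2*a) : ℝ):ℂ) * Complex.I := by
    rw [← Complex.exp_add]
    have h2 : (a:ℂ)*Complex.I + (a:ℂ)*Complex.I = ((2*a : ℝ):ℂ) * Complex.I := by
      push_cast; ring
    rw [h2, Complex.exp_mul_I, Complex.ofReal_cos, Complex.ofReal_sin]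
  have hsc : ((s:ℝ):ℂ) ≠ 0 := by exact_mod_cast hs
  rw [div_mul_eq_mul_div, mul_assoc, he2, Complex.ofReal_div, Complex.ofReal_div,
    Complex.ofReal_neg]
  have hrhs : ((Real.sin (2*a):ℝ):ℂ)/((s:ℝ):ℂ) + -((Real.cos (2*a):ℝ):ℂ)/((s:ℝ):ℂ)*Complex.I
      = (((Real.sin (2*a):ℝ):ℂ) + -((Real.cos (2*a):ℝ):ℂ)*Complex.I)/((s:ℝ):ℂ) := by
    ring
  rw [hrhs, div_eq_div_iff hsc hsc]
  linear_combination (-((Real.sin (2*a) : ℝ):ℂ) * ((s:ℝ):ℂ)) * Complex.I_sq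

lemma term_im (a s : ℝ) (hs : s ≠ 0) :
    (-Complex.I * Complex.exp ((a:ℝ) * Complex.I) / ((s:ℝ):ℂ) * Complex.exp ((a:ℝ)*Complex.I)).im
      = -Real.cos (2*a) / s := by
  rw [term_eq a s hs]
  simp [-Complex.ofReal_sin, -Complex.ofReal_cos]

lemma term_norm (a s : ℝ) :
    ‖(-Complex.I * Complex.exp ((a:ℝ)*Complex.I) / ((s:ℝ):ℂ))‖ = 1/|s| := by
  rw [norm_div, norm_mul]
  simp [Complex.norm_exp_ofReal_mul_I, Complex.norm_real]

lemma sum_at_one (n m : ℕ) (hnm : n = 2*m) (hm : 1 ≤ m) :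
    ∑ j ∈ Finset.range m, ∑ i ∈ Finset.range n, (Complex.exp ((2*π*j/n : ℝ) * Complex.I))⁻¹ ^ i
      = (n:ℂ) := by
  have hπ := Real.pi_pos
  have hn0 : (0:ℝ) < n := by
    have : 0 < n := by omega
    exact_mod_cast this
  rw [Finset.sum_eq_single_of_mem 0 (Finset.mem_range.mpr (by omega))]
  · norm_num
  · intro j hj hj0
    rw [Finset.mem_range] at hj
    have hr : (Complex.exp ((2*π*j/n : ℝ) * Complex.I))⁻¹ ≠ 1 := by
      rw [ne_eq, inv_eq_one]
      apply exp_ne_one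
      · have hj1 : (1:ℝ) ≤ j := by
          have : 1 ≤ j := by omega
          exact_mod_cast this
        positivity
      · have hjn : (j:ℝ) < n := by
          have : j < n := by omega
          exact_mod_cast this
        rw [div_lt_iff₀ hn0]
        nlinarith
    rw [geom_sum_eq hr]
    have hrn : ((Complex.exp ((2*π*j/n : ℝ) * Complex.I))⁻¹) ^ n = 1 := by
      rw [inv_pow, inv_eq_one, ← Complex.exp_nat_mul]
      have h3 : (n:ℂ) * (((2*π*j/n : ℝ):ℂ) * Complex.I) = (j:ℂ) * (2*(π:ℂ)*Complex.I) := by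
        have hnne : (n:ℂ) ≠ 0 := by
          have : n ≠ 0 := by omega
          exact_mod_cast this
        push_cast
        field_simp
      rw [h3]
      exact Complex.exp_int_mul_two_pi_mul_I j
    rw [hrn]
    simp

set_option maxHeartbeats 2000000 in
/-- Growth estimate for Rakhmanov's polynomial: the uniform norm on the unit circle of
`Q(z) = z^n − c Σ_{j<m} Σ_{l<n} ξ_j^{−l} z^l` (with `m = n/2`, `c = (ε/m)/(1+2ε)`,
`ξ_j = e^{2πij/n}`) is comparable to `1 + ε log n`. -/
theorem rakhmanov_polynomial_growth :
    ∃ (c₀ C₀ : ℝ) (n₀ : ℕ), 0 < c₀ ∧ 0 < C₀ ∧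
      ∀ n : ℕ, n₀ ≤ n → Even n → ∀ ε : ℝ, ε ∈ Set.Ioo (0 : ℝ) 1 →
        ∀ Q : Polynomial ℂ,
          Q = Polynomial.X ^ n -
            Polynomial.C ((((ε / (n / 2 : ℕ)) / (1 + 2 * ε) : ℝ)) : ℂ) *
              ∑ j ∈ Finset.range (n / 2), ∑ i ∈ Finset.range n,
                Polynomial.C ((Complex.exp (2 * π * (j : ℝ) / n * Complex.I))⁻¹ ^ i) *
                  Polynomial.X ^ i →
          (∃ z : ℂ, ‖z‖ = 1 ∧ c₀ * (1 + ε * Real.log n) ≤ ‖Q.eval z‖) ∧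
          (∀ z : ℂ, ‖z‖ = 1 → ‖Q.eval z‖ ≤ C₀ * (1 + ε * Real.log n)) := by
  refine ⟨1/900, 4, 2, by norm_num, by norm_num, ?_⟩
  intro n hn2 hneven ε hε Q hQ
  obtain ⟨hε0, hε1⟩ := hε
  obtain ⟨k, hk⟩ := hneven
  have hmdiv : n / 2 = k := by omega
  set m := n / 2 with hmdef
  have hnm : n = 2 * m := by omega
  have hm1 : 1 ≤ m := by omega
  have hπ := Real.pi_pos
  have hπ3 := Real.pi_gt_three
  have hπ4 := Real.pi_le_four
  have hn0 : (0:ℝ) < n := by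
    have : 0 < n := by omega
    exact_mod_cast this
  have hm0 : (0:ℝ) < m := by
    have : 0 < m := by omega
    exact_mod_cast this
  have hnm' : (n:ℝ) = 2*(m:ℝ) := by exact_mod_cast hnm
  set c : ℝ := ε / (m:ℕ) / (1 + 2*ε) with hcdef
  have h2ε : (0:ℝ) < 1 + 2*ε := by linarith
  have hc0 : 0 < c := div_pos (div_pos hε0 hm0) h2ε
  have hlogn : 0 ≤ Real.log n := Real.log_nonneg (by exact_mod_cast (by omega : 1 ≤ n))
  -- eval formula
  have hexp : ∀ j : ℕ, 2 * (π:ℂ) * ((j:ℝ):ℂ) / ((n:ℕ):ℂ) * Complex.I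
      = ((2*π*j/n : ℝ):ℂ) * Complex.I := by
    intro j
    push_cast
    ring
  have heval : ∀ z : ℂ, Q.eval z = z^n - ((c:ℝ):ℂ) *
      ∑ j ∈ Finset.range m, ∑ i ∈ Finset.range n,
        (Complex.exp ((2*π*j/n : ℝ) * Complex.I))⁻¹ ^ i * z ^ i := by
    intro z
    rw [hQ]
    simp only [Polynomial.eval_sub, Polynomial.eval_pow, Polynomial.eval_X, Polynomial.eval_mul,
      Polynomial.eval_C, Polynomial.eval_finset_sum, hexp]
  -- sine positivity
  have hspos : ∀ t, t < m → 0 < Real.sin (π*(2*(t:ℝ)+1)/n) := by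
    intro t ht
    exact (x_pos n m hnm hm1 t ht).2.2
  have hcast21 : ∀ t : ℕ, ((2*t+1 : ℕ):ℝ) = 2*(t:ℝ)+1 := by
    intro t; push_cast; ring
  -- structured eval
  set F : ℕ → ℂ := fun t => -Complex.I * Complex.exp ((π*(2*(t:ℝ)+1)/n : ℝ) * Complex.I)
      / ((Real.sin (π*(2*(t:ℝ)+1)/n) : ℝ):ℂ) with hFdef
  have hsum : ∀ z : ℂ, ∑ j ∈ Finset.range m, ∑ i ∈ Finset.range n,
      (Complex.exp ((2*π*j/n : ℝ) * Complex.I))⁻¹ ^ i * z ^ i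
      = (m:ℂ) + ∑ t ∈ Finset.range m, F t * z^(2*t+1) := by
    intro z
    rw [Finset.sum_comm]
    have h1 : ∑ i ∈ Finset.range n, ∑ j ∈ Finset.range m,
        (Complex.exp ((2*π*j/n : ℝ) * Complex.I))⁻¹ ^ i * z ^ i
        = ∑ i ∈ Finset.range n,
            (∑ j ∈ Finset.range m, (Complex.exp ((2*π*j/n : ℝ) * Complex.I))⁻¹ ^ i) * z ^ i := by
      apply Finset.sum_congr rfl
      intro i _
      rw [Finset.sum_mul]
    have h2 : Finset.range n = Finset.range (2*m) := by rw [hnm]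
    rw [h1, h2, sum_range_even_odd
      (fun i => (∑ j ∈ Finset.range m, (Complex.exp ((2*π*j/n : ℝ) * Complex.I))⁻¹ ^ i) * z ^ i) m]
    congr 1
    · -- even part equals m
      rw [Finset.sum_eq_single_of_mem 0 (Finset.mem_range.mpr (by omega))]
      · simp
      · intro t ht ht0
        rw [Finset.mem_range] at ht
        rw [Tsum n m hnm hm1 (2*t) (by omega) (by omega),
          if_neg (Nat.not_odd_iff_even.mpr (even_two_mul t))]
        simp
    · apply Finset.sum_congr rfl
      intro t ht
      rw [Finset.mem_range] at ht
      rw [Tsum n m hnm hm1 (2*t+1) (by omega) (by omega), if_pos (odd_two_mul_add_one t)]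
      rw [hcast21 t, hFdef]
  -- real sums
  set H : ℝ := ∑ t ∈ Finset.range m, (1:ℝ)/(2*t+1) with hHdef
  set S : ℝ := ∑ t ∈ Finset.range m, 1/Real.sin (π*(2*(t:ℝ)+1)/n) with hSdef
  have hH0 : 0 ≤ H := by
    apply Finset.sum_nonneg
    intro t _
    positivity
  have hSlow : ((n:ℝ)/π) * H ≤ S := Slow n m hnm hm1
  have hShigh : S ≤ (n:ℝ) * H := Shigh n m hnm hm1
  have hHlow : Real.log (m+1) ≤ 2*H := Hlow m
  have hHhigh : H ≤ 1 + Real.log m := Hhigh m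
  have hS0 : 0 ≤ S := le_trans (mul_nonneg (by positivity) hH0) hSlow
  have hcm : c * m = ε / (1+2*ε) := by
    rw [hcdef]
    field_simp
  have hcn : c * n = 2*ε / (1+2*ε) := by
    rw [hcdef, hnm']
    field_simp
  have hlogm : Real.log m ≤ Real.log n :=
    Real.log_le_log hm0 (by exact_mod_cast (by omega : m ≤ n))
  constructor
  · -- lower bound
    by_cases hA : ε * Real.log n ≤ 60*π
    · -- small case : z = 1
      refine ⟨1, by simp, ?_⟩
      have h1 : Q.eval 1 = ((1 - c*n : ℝ):ℂ) := by
        rw [heval 1]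
        simp only [one_pow, mul_one]
        rw [sum_at_one n m hnm hm1]
        push_cast
        ring
      have h2 : (1:ℝ) - c*n = 1/(1+2*ε) := by
        rw [hcn]
        field_simp; ring
      rw [h1, h2, Complex.norm_real, Real.norm_eq_abs, abs_of_pos (by positivity)]
      have h3 : (1:ℝ)/3 ≤ 1/(1+2*ε) :=
        one_div_le_one_div_of_le h2ε (by linarith)
      have h4 : 1 + ε * Real.log n ≤ 1 + 60*π := by linarith
      calc (1:ℝ)/900 * (1 + ε * Real.log n) ≤ 1/900 * (1 + 60*π) := by
            apply mul_le_mul_of_nonneg_left h4 (by norm_num)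
        _ ≤ 1/3 := by nlinarith
        _ ≤ 1/(1+2*ε) := h3
    · -- large case : z₀ = exp(iπ/n)
      push_neg at hA
      set z₀ : ℂ := Complex.exp (((π/n : ℝ):ℂ) * Complex.I) with hz₀def
      have hz₀norm : ‖z₀‖ = 1 := by
        rw [hz₀def, Complex.norm_exp_ofReal_mul_I]
      refine ⟨z₀, hz₀norm, ?_⟩
      have hz₀n : z₀^n = -1 := by
        rw [hz₀def, ← Complex.exp_nat_mul]
        have h5 : (n:ℂ) * (((π/n : ℝ):ℂ) * Complex.I) = (π:ℂ) * Complex.I := by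
          have hnne : (n:ℂ) ≠ 0 := by
            have : n ≠ 0 := by omega
            exact_mod_cast this
          push_cast
          field_simp
        rw [h5, Complex.exp_pi_mul_I]
      have hz₀pow : ∀ t : ℕ, z₀^(2*t+1)
          = Complex.exp (((π*(2*(t:ℝ)+1)/n : ℝ):ℂ) * Complex.I) := by
        intro t
        rw [hz₀def, ← Complex.exp_nat_mul]
        congr 1
        have hnne : (n:ℂ) ≠ 0 := by
          have : n ≠ 0 := by omega
          exact_mod_cast this
        push_cast
        field_simp
      have him : (Q.eval z₀).im = c * ∑ t ∈ Finset.range m,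
          Real.cos (2*(π*(2*(t:ℝ)+1)/n)) / Real.sin (π*(2*(t:ℝ)+1)/n) := by
        rw [heval z₀, hsum z₀]
        have h6 : ∀ t ∈ Finset.range m,
            (F t * z₀^(2*t+1)).im
            = -Real.cos (2*(π*(2*(t:ℝ)+1)/n)) / Real.sin (π*(2*(t:ℝ)+1)/n) := by
          intro t ht
          rw [Finset.mem_range] at ht
          rw [hz₀pow t, hFdef]
          exact term_im _ _ (hspos t ht).ne'
        rw [hz₀n]
        rw [Complex.sub_im, Complex.im_ofReal_mul, Complex.add_im]
        rw [Complex.im_sum, Finset.sum_congr rfl h6]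
        simp only [Complex.neg_im, Complex.one_im, Complex.natCast_im, neg_zero, zero_add]
        have h7 : ∑ x ∈ Finset.range m,
            -Real.cos (2*(π*(2*(x:ℝ)+1)/n)) / Real.sin (π*(2*(x:ℝ)+1)/n)
            = -∑ x ∈ Finset.range m,
                Real.cos (2*(π*(2*(x:ℝ)+1)/n)) / Real.sin (π*(2*(x:ℝ)+1)/n) := by
          rw [← Finset.sum_neg_distrib]
          apply Finset.sum_congr rfl
          intro x _
          ring
        rw [h7]
        ring
      have hE : S - 2*m ≤ ∑ t ∈ Finset.range m,
          Real.cos (2*(π*(2*(t:ℝ)+1)/n)) / Real.sin (π*(2*(t:ℝ)+1)/n) := by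
        have h8 : ∀ t ∈ Finset.range m,
            1/Real.sin (π*(2*(t:ℝ)+1)/n) - 2*Real.sin (π*(2*(t:ℝ)+1)/n)
            ≤ Real.cos (2*(π*(2*(t:ℝ)+1)/n)) / Real.sin (π*(2*(t:ℝ)+1)/n) := by
          intro t ht
          rw [Finset.mem_range] at ht
          have hst := hspos t ht
          have hcos : Real.cos (2*(π*(2*(t:ℝ)+1)/n))
              = 1 - 2*(Real.sin (π*(2*(t:ℝ)+1)/n))^2 := by
            rw [Real.cos_two_mul']
            have := Real.sin_sq_add_cos_sq (π*(2*(t:ℝ)+1)/n)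
            linarith
          rw [hcos]
          rw [sub_div]
          apply le_of_eq
          congr 1
          field_simp
        calc S - 2*m = ∑ t ∈ Finset.range m, 1/Real.sin (π*(2*(t:ℝ)+1)/n)
              - ∑ t ∈ Finset.range m, (2:ℝ) := by
                rw [hSdef, Finset.sum_const, Finset.card_range]
                push_cast
                ring
          _ = ∑ t ∈ Finset.range m,
              (1/Real.sin (π*(2*(t:ℝ)+1)/n) - 2) := by rw [Finset.sum_sub_distrib]
          _ ≤ ∑ t ∈ Finset.range m,
              (1/Real.sin (π*(2*(t:ℝ)+1)/n) - 2*Real.sin (π*(2*(t:ℝ)+1)/n)) := by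
                apply Finset.sum_le_sum
                intro t ht
                rw [Finset.mem_range] at ht
                have := Real.sin_le_one (π*(2*(t:ℝ)+1)/n)
                have := hspos t ht
                nlinarith
          _ ≤ _ := Finset.sum_le_sum h8
      -- numeric chain
      have h9 : c * (S - 2*m) ≤ (Q.eval z₀).im := by
        rw [him]
        apply mul_le_mul_of_nonneg_left hE hc0.le
      have h10 : c * S ≥ ε/(3*π) * Real.log (m+1) := by
        have hc3 : c ≥ ε/(m:ℝ)/3 := by
          rw [hcdef]
          apply div_le_div_of_nonneg_left (by positivity) (by positivity) (by linarith)
        have h11 : c * S ≥ (ε/(m:ℝ)/3) * (((n:ℝ)/π) * H) := by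
          apply mul_le_mul hc3 hSlow (mul_nonneg (by positivity) hH0) hc0.le
        have h12 : (ε/(m:ℝ)/3) * (((n:ℝ)/π) * H) = (2*ε/(3*π)) * H := by
          rw [hnm']
          field_simp
        rw [h12] at h11
        calc ε/(3*π) * Real.log (m+1) ≤ (2*ε/(3*π)) * H := by
              have := hHlow
              have hpos : (0:ℝ) ≤ ε/(3*π) := by positivity
              calc ε/(3*π) * Real.log (m+1) ≤ ε/(3*π) * (2*H) :=
                    mul_le_mul_of_nonneg_left hHlow hpos
                _ = (2*ε/(3*π)) * H := by ring
          _ ≤ c * S := h11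
      have hlogm1 : Real.log n - 1 ≤ Real.log (m+1) := by
        have h13 : (n:ℝ)/2 ≤ (m:ℝ)+1 := by rw [hnm']; linarith
        have h14 : Real.log ((n:ℝ)/2) ≤ Real.log ((m:ℝ)+1) :=
          Real.log_le_log (by positivity) h13
        rw [Real.log_div (by positivity) (by norm_num)] at h14
        have h15 : Real.log 2 ≤ 1 := by
          have := Real.log_two_lt_d9
          linarith
        linarith
      have hc2m : c * (2*m) ≤ 2 := by
        have h19 : c * (2*(m:ℝ)) = 2 * (c * m) := by ring
        have h19' : ε/(1+2*ε) ≤ 1 := by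
          rw [div_le_one h2ε]
          linarith
        rw [h19, hcm]
        linarith
      have hεπ : ε/(3*π) ≤ 1 := by
        rw [div_le_one (by positivity)]
        nlinarith
      have hfinal : ε * Real.log n/(3*π) - 3 ≤ (Q.eval z₀).im := by
        have h16 : c * (S - 2*m) = c*S - c*(2*m) := by ring
        have h17 : ε/(3*π) * Real.log (m+1) ≥ ε/(3*π) * (Real.log n - 1) := by
          apply mul_le_mul_of_nonneg_left hlogm1 (by positivity)
        have h18 : ε/(3*π) * (Real.log n - 1) = ε * Real.log n/(3*π) - ε/(3*π) := by ring
        nlinarith [h9, h10, hc2m, hεπ]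
      have hAbig : (60:ℝ)*π < ε * Real.log n := hA
      have hA1 : (1:ℝ) ≤ ε * Real.log n := by nlinarith
      have h31 : ε * Real.log n/12 ≤ ε * Real.log n/(3*π) := by
        apply div_le_div_of_nonneg_left (by nlinarith) (by positivity) (by nlinarith)
      calc (1:ℝ)/900 * (1 + ε * Real.log n) ≤ ε * Real.log n / 450 := by linarith
        _ ≤ ε * Real.log n/(3*π) - 3 := by linarith
        _ ≤ (Q.eval z₀).im := hfinal
        _ ≤ |(Q.eval z₀).im| := le_abs_self _
        _ ≤ ‖Q.eval z₀‖ := by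
            skip
            exact Complex.abs_im_le_norm _
  · -- upper bound
    intro z hz
    rw [heval z, hsum z]
    have hnorm1 : ∀ t ∈ Finset.range m,
        ‖F t * z^(2*t+1)‖ = 1/Real.sin (π*(2*(t:ℝ)+1)/n) := by
      intro t ht
      rw [Finset.mem_range] at ht
      rw [hFdef, norm_mul, norm_pow, hz, one_pow, mul_one, term_norm,
        abs_of_pos (hspos t ht)]
    have hsumnorm : ‖∑ t ∈ Finset.range m, F t * z^(2*t+1)‖ ≤ S := by
      calc ‖∑ t ∈ Finset.range m, F t * z^(2*t+1)‖
          ≤ ∑ t ∈ Finset.range m, ‖F t * z^(2*t+1)‖ := norm_sum_le _ _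
        _ = S := by rw [hSdef, Finset.sum_congr rfl hnorm1]
    have hWnorm : ‖(m:ℂ) + ∑ t ∈ Finset.range m, F t * z^(2*t+1)‖ ≤ (m:ℝ) + S := by
      calc ‖(m:ℂ) + ∑ t ∈ Finset.range m, F t * z^(2*t+1)‖
          ≤ ‖(m:ℂ)‖ + ‖∑ t ∈ Finset.range m, F t * z^(2*t+1)‖ := norm_add_le _ _
        _ ≤ (m:ℝ) + S := by
            apply add_le_add _ hsumnorm
            rw [RCLike.norm_natCast]
    calc ‖z^n - ((c:ℝ):ℂ) * ((m:ℂ) + ∑ t ∈ Finset.range m, F t * z^(2*t+1))‖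
        ≤ ‖z^n‖ + ‖((c:ℝ):ℂ)‖ * ‖(m:ℂ) + ∑ t ∈ Finset.range m, F t * z^(2*t+1)‖ := by
          rw [← norm_mul]
          exact norm_sub_le _ _
      _ ≤ 1 + c * ((m:ℝ) + S) := by
          rw [norm_pow, hz, one_pow]
          gcongr 1 + ?_
          rw [Complex.norm_real, Real.norm_eq_abs, abs_of_pos hc0]
          exact mul_le_mul_of_nonneg_left hWnorm hc0.le
      _ ≤ 4 * (1 + ε * Real.log n) := by
          have h20 : c * S ≤ 2*ε*(1 + Real.log n) := by
            calc c * S ≤ c * ((n:ℝ) * H) := mul_le_mul_of_nonneg_left hShigh hc0.le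
              _ = (c * n) * H := by ring
              _ = (2*ε/(1+2*ε)) * H := by rw [hcn]
              _ ≤ 2*ε*H := by
                  apply mul_le_mul_of_nonneg_right _ hH0
                  rw [div_le_iff₀ h2ε]
                  nlinarith
              _ ≤ 2*ε*(1 + Real.log n) := by
                  apply mul_le_mul_of_nonneg_left _ (by positivity)
                  linarith
          have h21 : c * m ≤ 1 := by
            rw [hcm, div_le_one h2ε]
            linarith
          have h22 : c * ((m:ℝ) + S) = c*m + c*S := by ring
          nlinarith
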